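/- Let Ω ⊂ ℝ^n be a bounded open set and q > 0. If (u_k)_{k∈ℕ} ⊂ L^{q+1}(Ω, ℝ^N) and u_∞ ∈ L^{q+1}(Ω, ℝ^N) are such that ⟦u_k⟧^{q+1} → ⟦u_∞⟧^{q+1} strongly in L^1(Ω, ℝ^N) as k → ∞, then u_k → u_∞ strongly in L^{q+1}(Ω, ℝ^N). -/

import Mathlib

open Real MeasureTheory

/-- The power `⟦w⟧^α := |w|^{α−1} w` (with `⟦0⟧^α = 0`). -/
noncomputable def vpow {N : ℕ} (α : ℝ) (w : EuclideanSpace ℝ (Fin N)) :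
    EuclideanSpace ℝ (Fin N) :=
  ‖w‖ ^ (α - 1) • w


lemma bern {α r s : ℝ} (hα : 1 ≤ α) (hs : 0 ≤ s) (hsr : s ≤ r) :
    r ^ α - s ^ α ≤ α * (r ^ (α - 1) * (r - s)) := by
  rcases eq_or_lt_of_le (hs.trans hsr) with hr | hr
  · have : s = 0 := le_antisymm (hsr.trans hr.symm.le) hs
    subst this
    rw [← hr, Real.zero_rpow (ne_of_gt (by linarith : (0:ℝ) < α))]
    simp
  · have hsr0 : (0:ℝ) ≤ s / r := by positivity
    have key := one_add_mul_self_le_rpow_one_add (s := s / r - 1)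
      (by linarith) hα
    rw [add_sub_cancel] at key
    have hrα : (0:ℝ) < r ^ α := Real.rpow_pos_of_pos hr _
    have h1 : (s / r) ^ α = s ^ α / r ^ α := Real.div_rpow hs hr.le α
    have h2 : r ^ α / r = r ^ (α - 1) := by
      rw [Real.rpow_sub hr, Real.rpow_one]
    -- from key : 1 + α * (s/r - 1) ≤ s^α / r^α
    have key2 : r ^ α + α * (s / r - 1) * r ^ α ≤ s ^ α := by
      have := mul_le_mul_of_nonneg_right key hrα.le
      rw [h1, div_mul_cancel₀ _ hrα.ne'] at this
      linarith
    have h3 : (s / r - 1) * r ^ α = s * r ^ (α - 1) - r ^ α := by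
      rw [sub_mul, one_mul, div_mul_eq_mul_div, mul_div_assoc, h2]
    have h4 : r ^ (α - 1) * r = r ^ α := by
      rw [← Real.rpow_add_one hr.ne', sub_add_cancel]
    nlinarith [key2, h3]

lemma norm_vpow {N : ℕ} {α : ℝ} (hα : 1 ≤ α) (w : EuclideanSpace ℝ (Fin N)) :
    ‖vpow α w‖ = ‖w‖ ^ α := by
  rw [vpow, norm_smul, Real.norm_rpow_of_nonneg (norm_nonneg _)]
  rcases eq_or_ne ‖w‖ 0 with h | h
  · rw [h, Real.zero_rpow (by linarith)]; simp [h]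
  · rw [Real.norm_of_nonneg (norm_nonneg w), ← Real.rpow_add_one h, sub_add_cancel]

lemma vpow_lower {N : ℕ} {α : ℝ} (hα : 1 ≤ α) (a b : EuclideanSpace ℝ (Fin N))
    (hba : ‖b‖ ≤ ‖a‖) :
    ‖a - b‖ ^ α ≤ α * 2 ^ α * ‖vpow α a - vpow α b‖ := by
  set r := ‖a‖ with hr
  set s := ‖b‖ with hs
  set d := ‖a - b‖ with hd
  have hs0 : 0 ≤ s := norm_nonneg _
  have hd0 : 0 ≤ d := norm_nonneg _
  have hα0 : (0:ℝ) < α := by linarith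
  have hvn : 0 ≤ ‖vpow α a - vpow α b‖ := norm_nonneg _
  rcases eq_or_lt_of_le hd0 with hd0' | hdpos
  · rw [← hd0', Real.zero_rpow hα0.ne']
    positivity
  have hd2r : d ≤ 2 * r := by
    calc d ≤ ‖a‖ + ‖b‖ := norm_sub_le _ _
    _ ≤ 2 * r := by linarith
  have hrpos : 0 < r := by linarith
  have hdr : d / 2 ≤ r := by linarith
  have hq0 : (0:ℝ) ≤ α - 1 := by linarith
  have hrq : (d/2) ^ (α-1) ≤ r ^ (α-1) := Real.rpow_le_rpow (by positivity) hdr hq0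
  have hsq : s ^ (α-1) ≤ r ^ (α-1) := Real.rpow_le_rpow hs0 hba hq0
  -- d^α = 2^α * ((d/2)^(α-1) * (d/2))
  have h2α : (0:ℝ) < 2 ^ α := Real.rpow_pos_of_pos (by norm_num) _
  have hdα : d ^ α = 2 ^ α * ((d/2) ^ (α-1) * (d/2)) := by
    rw [← Real.rpow_add_one (by positivity : ((d:ℝ)/2) ≠ 0), sub_add_cancel,
      Real.div_rpow hd0 (by norm_num)]
    field_simp
  -- lower bound 1 : ‖vdiff‖ ≥ r^α - s^α
  have hlow1 : r ^ α - s ^ α ≤ ‖vpow α a - vpow α b‖ := by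
    have := norm_sub_norm_le (vpow α a) (vpow α b)
    rwa [norm_vpow hα, norm_vpow hα] at this
  have hras : r ^ (α-1) * r = r ^ α := by
    rw [← Real.rpow_add_one hrpos.ne', sub_add_cancel]
  have hsas : s ^ (α-1) * s = s ^ α := by
    rcases eq_or_ne s 0 with h | h
    · rw [h, Real.zero_rpow hα0.ne', mul_zero]
    · rw [← Real.rpow_add_one h, sub_add_cancel]
  by_cases hcase : d / 2 ≤ α * (r - s)
  · -- case i
    have h1 : r ^ (α-1) * (r - s) ≤ r ^ α - s ^ α := by
      nlinarith [hsq, hba, hs0]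
    have h2 : (d/2) ^ (α-1) * (d/2) ≤ α * (r ^ (α-1) * (r - s)) := by
      have hrs : 0 ≤ r - s := by linarith
      calc (d/2) ^ (α-1) * (d/2) ≤ r ^ (α-1) * (α * (r - s)) := by
            apply mul_le_mul hrq hcase (by positivity) (by positivity)
      _ = α * (r ^ (α-1) * (r - s)) := by ring
    calc d ^ α = 2 ^ α * ((d/2) ^ (α-1) * (d/2)) := hdα
    _ ≤ 2 ^ α * (α * (r ^ (α-1) * (r - s))) := by
        apply mul_le_mul_of_nonneg_left h2 h2α.le
    _ ≤ 2 ^ α * (α * (r ^ α - s ^ α)) := by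
        apply mul_le_mul_of_nonneg_left (mul_le_mul_of_nonneg_left h1 hα0.le) h2α.le
    _ = α * 2 ^ α * (r ^ α - s ^ α) := by ring
    _ ≤ α * 2 ^ α * ‖vpow α a - vpow α b‖ :=
        mul_le_mul_of_nonneg_left hlow1 (mul_nonneg hα0.le h2α.le)
  · -- case ii : α (r - s) ≤ d/2
    push_neg at hcase
    -- decomposition lower bound
    have hdecomp : vpow α a - vpow α b
        = r ^ (α-1) • (a - b) + (r ^ (α-1) - s ^ (α-1)) • b := by
      simp only [vpow, smul_sub, sub_smul, ← hr, ← hs]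
      abel
    have hlow2 : r ^ (α-1) * d - (r ^ (α-1) - s ^ (α-1)) * s
        ≤ ‖vpow α a - vpow α b‖ := by
      rw [hdecomp]
      have h1 : ‖r ^ (α-1) • (a - b)‖ = r ^ (α-1) * d := by
        rw [norm_smul, Real.norm_of_nonneg (by positivity)]
      have h2 : ‖(r ^ (α-1) - s ^ (α-1)) • b‖ = (r ^ (α-1) - s ^ (α-1)) * s := by
        rw [norm_smul, Real.norm_of_nonneg (by linarith)]
      calc r ^ (α-1) * d - (r ^ (α-1) - s ^ (α-1)) * s
          = ‖r ^ (α-1) • (a - b)‖ - ‖(r ^ (α-1) - s ^ (α-1)) • b‖ := by rw [h1, h2]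
      _ ≤ ‖r ^ (α-1) • (a - b) + (r ^ (α-1) - s ^ (α-1)) • b‖ := by
          have := norm_sub_norm_le (r ^ (α-1) • (a - b))
            (-((r ^ (α-1) - s ^ (α-1)) • b))
          simpa [sub_neg_eq_add] using this
    -- chain: (r^{α-1}-s^{α-1}) s ≤ r^α - s^α ≤ α r^{α-1}(r-s) ≤ r^{α-1} d/2
    have hch1 : (r ^ (α-1) - s ^ (α-1)) * s ≤ r ^ α - s ^ α := by
      nlinarith [hsq, hba, hs0, Real.rpow_nonneg hs0 (α-1)]
    have hch2 : r ^ α - s ^ α ≤ α * (r ^ (α-1) * (r - s)) := bern hα hs0 hba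
    have hch3 : α * (r ^ (α-1) * (r - s)) ≤ r ^ (α-1) * (d/2) := by
      have hrp : 0 ≤ r ^ (α-1) := Real.rpow_nonneg hrpos.le _
      have := mul_le_mul_of_nonneg_left hcase.le hrp
      calc α * (r ^ (α-1) * (r - s)) = r ^ (α-1) * (α * (r - s)) := by ring
      _ ≤ r ^ (α-1) * (d/2) := this
    have hmain : r ^ (α-1) * (d/2) ≤ ‖vpow α a - vpow α b‖ := by
      have : r ^ (α-1) * d - r ^ (α-1) * (d/2) ≤ ‖vpow α a - vpow α b‖ := by
        have h := hlow2
        nlinarith [hch1, hch2, hch3]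
      linarith [this]
    have hfin : (d/2) ^ (α-1) * (d/2) ≤ ‖vpow α a - vpow α b‖ := by
      calc (d/2) ^ (α-1) * (d/2) ≤ r ^ (α-1) * (d/2) := by
            apply mul_le_mul_of_nonneg_right hrq (by positivity)
      _ ≤ _ := hmain
    calc d ^ α = 2 ^ α * ((d/2) ^ (α-1) * (d/2)) := hdα
    _ ≤ 2 ^ α * ‖vpow α a - vpow α b‖ := mul_le_mul_of_nonneg_left hfin h2α.le
    _ ≤ α * 2 ^ α * ‖vpow α a - vpow α b‖ :=
        mul_le_mul_of_nonneg_right (le_mul_of_one_le_left h2α.le hα) hvn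

lemma vpow_lower' {N : ℕ} {α : ℝ} (hα : 1 ≤ α) (a b : EuclideanSpace ℝ (Fin N)) :
    ‖a - b‖ ^ α ≤ α * 2 ^ α * ‖vpow α a - vpow α b‖ := by
  rcases le_total ‖b‖ ‖a‖ with h | h
  · exact vpow_lower hα a b h
  · have := vpow_lower hα b a h
    rwa [norm_sub_rev, norm_sub_rev (vpow α b)] at this

lemma continuous_vpow {N : ℕ} {α : ℝ} (hα : 1 ≤ α) :
    Continuous (vpow (N := N) α) := by
  apply Continuous.smul (f := fun w : EuclideanSpace ℝ (Fin N) => ‖w‖ ^ (α - 1)) (g := fun w => w) _ continuous_id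
  exact continuous_norm.rpow_const (fun w => Or.inr (by linarith))


/-- If `⟦u_k⟧^{q+1} → ⟦u_∞⟧^{q+1}` strongly in `L^1(Ω,ℝ^N)`, then
`u_k → u_∞` strongly in `L^{q+1}(Ω,ℝ^N)`. -/
theorem strong_Lq1_convergence (n N : ℕ) (Ω : Set (EuclideanSpace ℝ (Fin n)))
    (hΩo : IsOpen Ω) (hΩb : Bornology.IsBounded Ω) (q : ℝ) (hq : 0 < q)
    (u : ℕ → EuclideanSpace ℝ (Fin n) → EuclideanSpace ℝ (Fin N))
    (uinf : EuclideanSpace ℝ (Fin n) → EuclideanSpace ℝ (Fin N))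
    (hu : ∀ k, MemLp (u k) (ENNReal.ofReal (q + 1)) (volume.restrict Ω))
    (huinf : MemLp uinf (ENNReal.ofReal (q + 1)) (volume.restrict Ω))
    (hconv : Filter.Tendsto
      (fun k => ∫ x in Ω, ‖vpow (q + 1) (u k x) - vpow (q + 1) (uinf x)‖)
      Filter.atTop (nhds 0)) :
    Filter.Tendsto (fun k => ∫ x in Ω, ‖u k x - uinf x‖ ^ (q + 1))
      Filter.atTop (nhds 0) := by
  have hα : (1:ℝ) ≤ q + 1 := by linarith
  have hp_ne : ENNReal.ofReal (q + 1) ≠ 0 := by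
    simp [ENNReal.ofReal_eq_zero]; linarith
  have hp_top : ENNReal.ofReal (q + 1) ≠ ⊤ := ENNReal.ofReal_ne_top
  have hto : (ENNReal.ofReal (q + 1)).toReal = q + 1 :=
    ENNReal.toReal_ofReal (by linarith)
  set C := (q + 1) * 2 ^ (q + 1) with hC
  have hC0 : 0 ≤ C := by
    have : (0:ℝ) < 2 ^ (q+1) := Real.rpow_pos_of_pos (by norm_num) _
    positivity
  -- integrability of vpow of a Memℒp function
  have hIntV : ∀ k, Integrable
      (fun x => vpow (q+1) (u k x) - vpow (q+1) (uinf x)) (volume.restrict Ω) := by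
    intro k
    have h1 := (hu k).integrable_norm_rpow hp_ne hp_top
    have h2 := huinf.integrable_norm_rpow hp_ne hp_top
    rw [hto] at h1 h2
    apply Integrable.mono' (h1.add h2)
    · exact ((continuous_vpow hα).comp_aestronglyMeasurable
        (hu k).aestronglyMeasurable).sub
        ((continuous_vpow hα).comp_aestronglyMeasurable huinf.aestronglyMeasurable)
    · filter_upwards with x
      calc ‖vpow (q+1) (u k x) - vpow (q+1) (uinf x)‖
          ≤ ‖vpow (q+1) (u k x)‖ + ‖vpow (q+1) (uinf x)‖ := norm_sub_le _ _
      _ = ‖u k x‖ ^ (q+1) + ‖uinf x‖ ^ (q+1) := by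
          rw [norm_vpow hα, norm_vpow hα]
  apply squeeze_zero (g := fun k =>
      C * ∫ x in Ω, ‖vpow (q + 1) (u k x) - vpow (q + 1) (uinf x)‖)
  · intro k
    exact integral_nonneg fun x => Real.rpow_nonneg (norm_nonneg _) _
  · intro k
    have hmono : ∫ x in Ω, ‖u k x - uinf x‖ ^ (q+1) ≤
        ∫ x in Ω, C * ‖vpow (q + 1) (u k x) - vpow (q + 1) (uinf x)‖ := by
      apply integral_mono_of_nonneg
      · filter_upwards with x using Real.rpow_nonneg (norm_nonneg _) _
      · exact (hIntV k).norm.const_mul C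
      · filter_upwards with x using vpow_lower' hα (u k x) (uinf x)
    rwa [integral_const_mul] at hmono
  · have := hconv.const_mul C
    simpa using this
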